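/- Fix an IPC formula Q. Let θ = (Z₀, …, Z_N) be a finite sequence of IPC formulas one of whose terms is α = Q(X ⊃ Y) = (X ⊃ Y) ⊃ Q for some IPC formulas X, Y, and set α₀ = QQX = (X ⊃ Q) ⊃ Q and α₁ = QY = Y ⊃ Q. If D(θ) ∨ α₀ and D(θ) ∨ α₁ are both theorems of IPC, then D(θ) is a theorem of IPC. -/

import Mathlib

/-- IPC formulas: propositional variables and the conditional only. -/
inductive IPCForm : Type
  | var : ℕ → IPCForm
  | imp : IPCForm → IPCForm → IPCForm

infixr:60 (priority := high) " ⊃ " => IPCForm.imp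

/-- Hilbert-style IPC derivability from a set of hypotheses. -/
inductive IPCDeriv : Set IPCForm → IPCForm → Prop
  | hyp {Γ : Set IPCForm} {A : IPCForm} : A ∈ Γ → IPCDeriv Γ A
  | peirce {Γ : Set IPCForm} (A B : IPCForm) : IPCDeriv Γ (((A ⊃ B) ⊃ A) ⊃ A)
  | axK {Γ : Set IPCForm} (A B : IPCForm) : IPCDeriv Γ (A ⊃ (B ⊃ A))
  | axS {Γ : Set IPCForm} (A B C : IPCForm) :
      IPCDeriv Γ ((A ⊃ (B ⊃ C)) ⊃ ((A ⊃ B) ⊃ (A ⊃ C)))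
  | mp {Γ : Set IPCForm} {A B : IPCForm} :
      IPCDeriv Γ (A ⊃ B) → IPCDeriv Γ A → IPCDeriv Γ B

/-- Disjunction defined within IPC: A ∨ B := (A ⊃ B) ⊃ B. -/
def IPCForm.disj (A B : IPCForm) : IPCForm := (A ⊃ B) ⊃ B

/-- Multiple disjunction A₀ ∨ ⋯ ∨ A_N, associated to the left. -/
def IPCForm.bigDisj : (N : ℕ) → (Fin (N + 1) → IPCForm) → IPCForm
  | 0, A => A 0
  | N + 1, A => IPCForm.disj (IPCForm.bigDisj N (fun i => A i.castSucc)) (A (Fin.last (N + 1)))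

theorem IPCDeriv.weaken {Γ Γ' : Set IPCForm} {A : IPCForm} (h : IPCDeriv Γ A)
    (hs : Γ ⊆ Γ') : IPCDeriv Γ' A := by
  induction h with
  | hyp hm => exact .hyp (hs hm)
  | peirce A B => exact .peirce A B
  | axK A B => exact .axK A B
  | axS A B C => exact .axS A B C
  | mp _ _ ih1 ih2 => exact .mp ih1 ih2

theorem IPCDeriv.id {Γ : Set IPCForm} (A : IPCForm) : IPCDeriv Γ (A ⊃ A) :=
  .mp (.mp (.axS A (A ⊃ A) A) (.axK A (A ⊃ A))) (.axK A A)

theorem IPCDeriv.ded_aux {Γ' : Set IPCForm} {B : IPCForm} (h : IPCDeriv Γ' B) :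
    ∀ (Γ : Set IPCForm) (A : IPCForm), Γ' = insert A Γ → IPCDeriv Γ (A ⊃ B) := by
  induction h with
  | @hyp C hm =>
    intro Γ A hE
    subst hE
    rcases hm with h | h
    · subst h; exact .id _
    · exact .mp (.axK C A) (.hyp h)
  | peirce C D => intro Γ A _; exact .mp (.axK _ A) (.peirce C D)
  | axK C D => intro Γ A _; exact .mp (.axK _ A) (.axK C D)
  | axS C D E => intro Γ A _; exact .mp (.axK _ A) (.axS C D E)
  | @mp C D _ _ ih1 ih2 =>
    intro Γ A hE
    exact .mp (.mp (.axS A C D) (ih1 Γ A hE)) (ih2 Γ A hE)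

/-- Deduction theorem. -/
theorem IPCDeriv.ded {Γ : Set IPCForm} {A B : IPCForm}
    (h : IPCDeriv (insert A Γ) B) : IPCDeriv Γ (A ⊃ B) :=
  h.ded_aux Γ A rfl

theorem IPCDeriv.comp {Γ : Set IPCForm} {A B C : IPCForm}
    (h1 : IPCDeriv Γ (A ⊃ B)) (h2 : IPCDeriv Γ (B ⊃ C)) : IPCDeriv Γ (A ⊃ C) := by
  apply IPCDeriv.ded
  have hs : Γ ⊆ insert A Γ := Set.subset_insert _ _
  exact .mp (h2.weaken hs) (.mp (h1.weaken hs) (.hyp (Set.mem_insert _ _)))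

/-- Disjunct injection. -/
theorem IPCDeriv.inj {Γ : Set IPCForm} (N : ℕ) (Z : Fin (N + 1) → IPCForm)
    (k : Fin (N + 1)) : IPCDeriv Γ (Z k ⊃ IPCForm.bigDisj N Z) := by
  induction N with
  | zero =>
    have : k = 0 := Fin.fin_one_eq_zero k
    subst this
    exact .id _
  | succ N ih =>
    show IPCDeriv Γ (Z k ⊃ IPCForm.disj _ _)
    induction k using Fin.lastCases with
    | last => exact .axK _ _
    | cast i =>
      refine IPCDeriv.comp (ih (fun j => Z j.castSucc) i) ?_
      apply IPCDeriv.ded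
      apply IPCDeriv.ded
      exact .mp (.hyp (Set.mem_insert _ _))
        (.hyp (Set.mem_insert_of_mem _ (Set.mem_insert _ _)))

/-- Rule A is a derived rule of IPC. -/
theorem ipc_ruleA (Q : IPCForm) (N : ℕ) (Z : Fin (N + 1) → IPCForm) (X Y : IPCForm)
    (hterm : ∃ k : Fin (N + 1), Z k = ((X ⊃ Y) ⊃ Q))
    (h0 : IPCDeriv ∅ ((IPCForm.bigDisj N Z).disj ((X ⊃ Q) ⊃ Q)))
    (h1 : IPCDeriv ∅ ((IPCForm.bigDisj N Z).disj (Y ⊃ Q))) :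
    IPCDeriv ∅ (IPCForm.bigDisj N Z) := by
  obtain ⟨k, hk⟩ := hterm
  set D := IPCForm.bigDisj N Z with hD
  have hαD : ∀ {Γ : Set IPCForm}, IPCDeriv Γ (((X ⊃ Y) ⊃ Q) ⊃ D) := by
    intro Γ; rw [← hk]; exact IPCDeriv.inj N Z k
  -- suffices to derive (D ⊃ Q) ⊃ D, then Peirce
  have key : IPCDeriv ∅ ((D ⊃ Q) ⊃ D) := by
    apply IPCDeriv.ded
    set Γ : Set IPCForm := insert (D ⊃ Q) ∅ with hΓ
    have hDQ : IPCDeriv Γ (D ⊃ Q) := .hyp (Set.mem_insert _ _)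
    have hsub : (∅ : Set IPCForm) ⊆ Γ := Set.empty_subset _
    -- α₀ = (X ⊃ Q) ⊃ Q
    have hα₀ : IPCDeriv Γ ((X ⊃ Q) ⊃ Q) :=
      .mp (h0.weaken hsub) (hDQ.comp (.axK Q (X ⊃ Q)))
    -- α₁ = Y ⊃ Q
    have hα₁ : IPCDeriv Γ (Y ⊃ Q) :=
      .mp (h1.weaken hsub) (hDQ.comp (.axK Q Y))
    -- (X ⊃ Y) ⊃ Q
    have hXYQ : IPCDeriv Γ ((X ⊃ Y) ⊃ Q) := by
      apply IPCDeriv.ded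
      have hs1 : Γ ⊆ insert (X ⊃ Y) Γ := Set.subset_insert _ _
      refine .mp (hα₀.weaken hs1) ?_
      exact IPCDeriv.comp (.hyp (Set.mem_insert _ _)) (hα₁.weaken hs1)
    -- α ⊃ Q
    have hαQ : IPCDeriv Γ (((X ⊃ Y) ⊃ Q) ⊃ Q) := IPCDeriv.comp hαD hDQ
    have hQ : IPCDeriv Γ Q := .mp hαQ hXYQ
    exact .mp hαD (.mp (.axK Q (X ⊃ Y)) hQ)
  exact .mp (.peirce D Q) key
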